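/- arXiv:1605.06882 — 3 statements merged into one kernel-verified Lean document; each statement's English description precedes it below -/
import Mathlib

section
/- Brandes' recursion: for a source s and a node v with v ≠ s, the dependency satisfies δ_{s*}(v) = Σ_{w : v ∈ P_s(w)} (σ_{sv}/σ_{sw}) · (1 + δ_{s*}(w)). -/
open Finset
open scoped Classical

/-- Number of shortest `s`-`t` paths (walks of length `d(s,t)`). -/
noncomputable def sigma' {V : Type*} (G : SimpleGraph V) (s t : V) : ℕ :=
  {p : G.Walk s t | p.length = G.dist s t}.ncard

/-- Number of shortest `s`-`t` paths having `v` as an internal node. -/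
noncomputable def sigmaThrough {V : Type*} (G : SimpleGraph V) (s t v : V) : ℕ :=
  {p : G.Walk s t | p.length = G.dist s t ∧ v ∈ p.support ∧ v ≠ s ∧ v ≠ t}.ncard

/-- Pair dependency `δ_{st}(v) = σ_{st}(v) / σ_{st}`. -/
noncomputable def pairDep {V : Type*} (G : SimpleGraph V) (s t v : V) : ℝ :=
  (sigmaThrough G s t v : ℝ) / (sigma' G s t : ℝ)

/-- Dependency of source `s` on `v`: `δ_{s*}(v) = Σ_{t ≠ s, t ≠ v} δ_{st}(v)`. -/
noncomputable def dep {V : Type*} [Fintype V] (G : SimpleGraph V) (s v : V) : ℝ :=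
  ∑ t ∈ Finset.univ.filter (fun t => t ≠ s ∧ t ≠ v), pairDep G s t v

namespace BrandesAux
open SimpleGraph Walk

set_option linter.unusedSectionVars false
set_option linter.unusedVariables false
set_option linter.unnecessarySimpa false

variable {V : Type*} {G : SimpleGraph V}

lemma finite_shortest [Fintype V] (G : SimpleGraph V) (s t : V) :
    {p : G.Walk s t | p.length = G.dist s t}.Finite := by
  classical
  exact Set.toFinite _

lemma sigma'_pos [Fintype V] (hG : G.Connected) (s t : V) : 0 < sigma' G s t := by
  obtain ⟨p, hp⟩ := (hG s t).exists_walk_length_eq_dist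
  rw [sigma']
  exact (Set.ncard_pos (finite_shortest G s t)).mpr ⟨p, hp⟩

lemma takeUntil_end_eq {s v : V} (q : G.Walk s v) (hq : q.length = G.dist s v)
    (h : v ∈ q.support) : q.takeUntil v h = q := by
  have hspec := q.take_spec h
  have hlen : (q.takeUntil v h).length + (q.dropUntil v h).length = q.length := by
    rw [← Walk.length_append, hspec]
  have h1 : G.dist s v ≤ (q.takeUntil v h).length := SimpleGraph.dist_le _
  have h2 : (q.dropUntil v h).length = 0 := by omega
  have h3 : q.dropUntil v h = Walk.nil := Walk.nil_iff_eq_nil.mp (Walk.length_eq_zero_iff.mp h2)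
  rw [h3, Walk.append_nil] at hspec
  exact hspec

lemma split_lengths (hG : G.Connected) {s t v : V} (p : G.Walk s t)
    (hp : p.length = G.dist s t) (h : v ∈ p.support) :
    (p.takeUntil v h).length = G.dist s v ∧ (p.dropUntil v h).length = G.dist v t ∧
      G.dist s v + G.dist v t = G.dist s t := by
  have hspec := p.take_spec h
  have hlen : (p.takeUntil v h).length + (p.dropUntil v h).length = p.length := by
    rw [← Walk.length_append, hspec]
  have h1 : G.dist s v ≤ (p.takeUntil v h).length := SimpleGraph.dist_le _
  have h2 : G.dist v t ≤ (p.dropUntil v h).length := SimpleGraph.dist_le _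
  have h3 : G.dist s t ≤ G.dist s v + G.dist v t := hG.dist_triangle
  omega

lemma takeUntil_start {u t : V} (p : G.Walk u t) (h : u ∈ p.support) :
    p.takeUntil u h = Walk.nil := by
  cases p with
  | nil => rfl
  | cons h' q => simp [Walk.takeUntil]

lemma append_left_cancel {s v t : V} {q : G.Walk s v} {r r' : G.Walk v t}
    (h : q.append r = q.append r') : r = r' := by
  induction q with
  | nil => simpa using h
  | cons ha q ih =>
    rw [Walk.cons_append, Walk.cons_append] at h
    exact ih (by simpa using h)

lemma takeUntil_append {s v t : V} (q : G.Walk s v) (r : G.Walk v t)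
    (hq : ∀ h : v ∈ q.support, q.takeUntil v h = q)
    (h : v ∈ (q.append r).support) :
    (q.append r).takeUntil v h = q := by
  induction q with
  | nil => simpa using takeUntil_start r (by simpa using h)
  | @cons a b c ha q ih =>
    by_cases hac : a = c
    · subst hac
      have := hq (Walk.start_mem_support _)
      rw [takeUntil_start] at this
      exact absurd (congrArg Walk.length this) (by simp)
    · have hq' : ∀ h' : c ∈ q.support, q.takeUntil c h' = q := by
        intro h'
        have h0 : c ∈ (Walk.cons ha q).support := by simp [h']
        have := hq h0
        rw [Walk.takeUntil] at this
        rw [dif_neg hac] at this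
        simpa using this
      show (Walk.cons ha (q.append r)).takeUntil c h = Walk.cons ha q
      rw [Walk.takeUntil_cons (p := q.append r)
        (by simp [Walk.mem_support_append_iff, Walk.end_mem_support]) hac]
      simp only [Walk.cons.injEq, heq_eq_eq, true_and]
      exact ih r hq' (by simp [Walk.mem_support_append_iff, Walk.end_mem_support])

lemma takeUntil_congr {s t v : V} {p p' : G.Walk s t} (h : p = p')
    (hm : v ∈ p.support) (hm' : v ∈ p'.support) :
    p.takeUntil v hm = p'.takeUntil v hm' := by subst h; rfl

lemma ncard_prod {α β : Type*} (A : Set α) (B : Set β) :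
    (A ×ˢ B).ncard = A.ncard * B.ncard := by
  rw [← Nat.card_coe_set_eq, ← Nat.card_coe_set_eq, ← Nat.card_coe_set_eq,
    Nat.card_congr (Equiv.Set.prod A B), Nat.card_prod]

lemma sigmaThrough_eq [Fintype V] (hG : G.Connected) (s t v : V) (hs : v ≠ s) (ht : v ≠ t) :
    sigmaThrough G s t v =
      if G.dist s v + G.dist v t = G.dist s t then sigma' G s v * sigma' G v t else 0 := by
  by_cases hc : G.dist s v + G.dist v t = G.dist s t
  · rw [if_pos hc]
    have hbij : Set.BijOn (fun qr : G.Walk s v × G.Walk v t => qr.1.append qr.2)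
        ({q : G.Walk s v | q.length = G.dist s v} ×ˢ {r : G.Walk v t | r.length = G.dist v t})
        {p : G.Walk s t | p.length = G.dist s t ∧ v ∈ p.support ∧ v ≠ s ∧ v ≠ t} := by
      refine ⟨?_, ?_, ?_⟩
      · rintro ⟨q, r⟩ ⟨hq, hr⟩
        simp only [Set.mem_setOf_eq] at hq hr ⊢
        refine ⟨by rw [Walk.length_append, hq, hr, hc], ?_, hs, ht⟩
        rw [Walk.mem_support_append_iff]; exact Or.inl (Walk.end_mem_support q)
      · rintro ⟨q, r⟩ ⟨hq, hr⟩ ⟨q', r'⟩ ⟨hq', hr'⟩ heq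
        simp only [Set.mem_setOf_eq] at hq hr hq' hr'
        simp only at heq
        have hmem : v ∈ (q.append r).support := by
          rw [Walk.mem_support_append_iff]; exact Or.inl (Walk.end_mem_support q)
        have hmem' : v ∈ (q'.append r').support := by
          rw [Walk.mem_support_append_iff]; exact Or.inl (Walk.end_mem_support q')
        have h1 := takeUntil_append q r (fun h => takeUntil_end_eq q hq h) hmem
        have h2 := takeUntil_append q' r' (fun h => takeUntil_end_eq q' hq' h) hmem'
        have hqq : q = q' := by
          rw [← h1, ← h2]; exact takeUntil_congr heq hmem hmem'
        subst hqq
        have hrr : r = r' := append_left_cancel heq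
        rw [hrr]
      · rintro p ⟨hp, hmem, -, -⟩
        obtain ⟨ha, hb, -⟩ := split_lengths hG p hp hmem
        exact ⟨(p.takeUntil v hmem, p.dropUntil v hmem), ⟨ha, hb⟩, p.take_spec hmem⟩
    rw [sigmaThrough, ← hbij.image_eq, Set.ncard_image_of_injOn hbij.injOn, ncard_prod]
    rfl
  · rw [if_neg hc, sigmaThrough]
    have hset : {p : G.Walk s t | p.length = G.dist s t ∧ v ∈ p.support ∧ v ≠ s ∧ v ≠ t} = ∅ := by
      rw [Set.eq_empty_iff_forall_notMem]
      rintro p ⟨hp, hmem, -, -⟩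
      exact hc (split_lengths hG p hp hmem).2.2
    rw [hset, Set.ncard_empty]

lemma sigma'_adj {v t : V} (h : G.Adj v t) : sigma' G v t = 1 := by
  have hd : G.dist v t = 1 := SimpleGraph.dist_eq_one_iff_adj.mpr h
  rw [sigma', hd]
  have : {p : G.Walk v t | p.length = 1} = {Walk.cons h Walk.nil} := by
    ext p
    simp only [Set.mem_setOf_eq, Set.mem_singleton_iff]
    constructor
    · intro hp
      cases p with
      | nil => simp at hp
      | cons ha q =>
        rw [Walk.length_cons] at hp
        have hq : q.length = 0 := by omega
        cases q with
        | nil => rfl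
        | cons hb q' => simp at hq
    · rintro rfl; simp
  rw [this, Set.ncard_singleton]

lemma sigma'_first_step [Fintype V] (hG : G.Connected) {v t : V} (hvt : v ≠ t) :
    sigma' G v t =
      ∑ w ∈ univ.filter (fun w => G.Adj v w ∧ G.dist w t + 1 = G.dist v t), sigma' G w t := by
  have hpos : 0 < G.dist v t := hG.pos_dist_of_ne hvt
  set Tset : V → Set (G.Walk v t) := fun w =>
    {p : G.Walk v t | p.length = G.dist v t ∧ p.support.tail.head? = some w} with hTset
  have hTfin : ∀ w, (Tset w).Finite := fun w =>
    (finite_shortest G v t).subset (fun p hp => hp.1)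
  have hSfin := finite_shortest G v t
  have hcover : hSfin.toFinset =
      (univ.filter (fun w => G.Adj v w ∧ G.dist w t + 1 = G.dist v t)).biUnion
        (fun w => (hTfin w).toFinset) := by
    ext p
    simp only [Set.Finite.mem_toFinset, Set.mem_setOf_eq, Finset.mem_biUnion, Finset.mem_filter,
      Finset.mem_univ, true_and, hTset]
    constructor
    · intro hp
      cases p with
      | nil => exact absurd rfl hvt
      | @cons _ b _ ha q =>
        rw [Walk.length_cons] at hp
        have h1 : G.dist b t ≤ q.length := SimpleGraph.dist_le q
        have h2 : G.dist v t ≤ G.dist v b + G.dist b t := hG.dist_triangle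
        have h3 : G.dist v b = 1 := SimpleGraph.dist_eq_one_iff_adj.mpr ha
        refine ⟨b, ⟨ha, by omega⟩, by rw [Walk.length_cons]; omega, ?_⟩
        rw [Walk.support_cons, List.tail_cons, q.support_eq_cons, List.head?_cons]
    · rintro ⟨w, -, hp, -⟩
      exact hp
  have hdisj : ∀ w ∈ univ.filter (fun w => G.Adj v w ∧ G.dist w t + 1 = G.dist v t),
      ∀ w' ∈ univ.filter (fun w => G.Adj v w ∧ G.dist w t + 1 = G.dist v t), w ≠ w' →
      Disjoint ((hTfin w).toFinset) ((hTfin w').toFinset) := by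
    rintro w - w' - hww
    rw [Finset.disjoint_left]
    intro p hp hp'
    simp only [Set.Finite.mem_toFinset, Set.mem_setOf_eq, hTset] at hp hp'
    rw [hp.2] at hp'
    exact hww (Option.some_injective _ hp'.2)
  have hcard : ∀ w, G.Adj v w → G.dist w t + 1 = G.dist v t →
      ((hTfin w).toFinset).card = sigma' G w t := by
    intro w hw hd
    have himg : Tset w = (fun r : G.Walk w t => Walk.cons hw r) ''
        {r : G.Walk w t | r.length = G.dist w t} := by
      ext p
      simp only [Set.mem_setOf_eq, Set.mem_image, hTset]
      constructor
      · rintro ⟨hlen, hhead⟩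
        cases p with
        | nil => simp at hlen; simp at hd
        | @cons _ b _ ha q =>
          have hb : b = w := by
            rw [Walk.support_cons, List.tail_cons, q.support_eq_cons, List.head?_cons,
              Option.some_inj] at hhead
            exact hhead
          subst hb
          rw [Walk.length_cons] at hlen
          exact ⟨q, by omega, rfl⟩
      · rintro ⟨r, hr, rfl⟩
        refine ⟨by rw [Walk.length_cons, hr, hd], ?_⟩
        rw [Walk.support_cons, List.tail_cons, r.support_eq_cons, List.head?_cons]
    have hinj : Set.InjOn (fun r : G.Walk w t => Walk.cons hw r)
        {r : G.Walk w t | r.length = G.dist w t} := by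
      intro r hr r' hr' hrr
      simpa using hrr
    rw [← Set.ncard_eq_toFinset_card _ (hTfin w), himg, Set.ncard_image_of_injOn hinj, sigma']
  rw [sigma', Set.ncard_eq_toFinset_card _ hSfin, hcover, Finset.card_biUnion hdisj]
  apply Finset.sum_congr rfl
  intro w hw
  simp only [Finset.mem_filter, Finset.mem_univ, true_and] at hw
  exact hcard w hw.1 hw.2

lemma star [Fintype V] (hG : G.Connected) (s v t : V) (hvt : v ≠ t) :
    (if G.dist s v + G.dist v t = G.dist s t then sigma' G v t else 0) =
      ∑ w ∈ univ.filter (fun w => G.Adj v w ∧ G.dist s w = G.dist s v + 1),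
        (if w = t then 1
         else if G.dist s w + G.dist w t = G.dist s t then sigma' G w t else 0) := by
  by_cases hA : G.Adj v t ∧ G.dist s t = G.dist s v + 1
  · have hdvt : G.dist v t = 1 := SimpleGraph.dist_eq_one_iff_adj.mpr hA.1
    rw [if_pos (by omega), sigma'_adj hA.1]
    rw [Finset.sum_eq_single t]
    · rw [if_pos rfl]
    · intro w hw hwt
      simp only [Finset.mem_filter, Finset.mem_univ, true_and] at hw
      have hwtpos : 0 < G.dist w t := hG.pos_dist_of_ne hwt
      rw [if_neg hwt, if_neg (by omega)]
    · intro ht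
      exact absurd (by simp [hA.1, hA.2]) ht
  · by_cases hc : G.dist s v + G.dist v t = G.dist s t
    · rw [if_pos hc, sigma'_first_step hG hvt]
      have hterm : ∀ w ∈ univ.filter (fun w => G.Adj v w ∧ G.dist s w = G.dist s v + 1),
          (if w = t then 1
           else if G.dist s w + G.dist w t = G.dist s t then sigma' G w t else 0) =
          (if G.dist s w + G.dist w t = G.dist s t then sigma' G w t else 0) := by
        intro w hw
        simp only [Finset.mem_filter, Finset.mem_univ, true_and] at hw
        rcases eq_or_ne w t with rfl | hwt
        · exact absurd ⟨hw.1, by omega⟩ hA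
        · rw [if_neg hwt]
      rw [Finset.sum_congr rfl hterm, ← Finset.sum_filter, Finset.filter_filter]
      apply Finset.sum_congr _ (fun _ _ => rfl)
      ext w
      simp only [Finset.mem_filter, Finset.mem_univ, true_and]
      constructor
      · rintro ⟨hadj, hd⟩
        have h1 : G.dist s t ≤ G.dist s w + G.dist w t :=
          hG.dist_triangle (u := s) (v := w) (w := t)
        have h2 : G.dist s w ≤ G.dist s v + G.dist v w :=
          hG.dist_triangle (u := s) (v := v) (w := w)
        have h3 : G.dist v w = 1 := SimpleGraph.dist_eq_one_iff_adj.mpr hadj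
        exact ⟨⟨hadj, by omega⟩, by omega⟩
      · rintro ⟨⟨hadj, hd1⟩, hd2⟩
        exact ⟨hadj, by omega⟩
    · rw [if_neg hc]
      symm
      apply Finset.sum_eq_zero
      intro w hw
      simp only [Finset.mem_filter, Finset.mem_univ, true_and] at hw
      rcases eq_or_ne w t with rfl | hwt
      · exact absurd ⟨hw.1, by omega⟩ hA
      · have h1 : G.dist v t ≤ G.dist v w + G.dist w t :=
          hG.dist_triangle (u := v) (v := w) (w := t)
        have h2 : G.dist s t ≤ G.dist s v + G.dist v t :=
          hG.dist_triangle (u := s) (v := v) (w := t)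
        have h3 : G.dist v w = 1 := SimpleGraph.dist_eq_one_iff_adj.mpr hw.1
        rw [if_neg hwt, if_neg (by omega)]

lemma sigmaThrough_end (G : SimpleGraph V) (s t : V) : sigmaThrough G s t t = 0 := by
  rw [sigmaThrough]
  have h : {p : G.Walk s t | p.length = G.dist s t ∧ t ∈ p.support ∧ t ≠ s ∧ t ≠ t} = ∅ := by
    rw [Set.eq_empty_iff_forall_notMem]; rintro p ⟨-, -, -, h⟩; exact h rfl
  rw [h, Set.ncard_empty]

lemma succ_ne_s {s v w : V} (hd : G.dist s w = G.dist s v + 1) : w ≠ s := by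
  intro h; subst h
  rw [SimpleGraph.dist_self] at hd
  omega

lemma per_t [Fintype V] (hG : G.Connected) (s v t : V) (hvs : v ≠ s) (hvt : v ≠ t) :
    pairDep G s t v =
      ∑ w ∈ univ.filter (fun w => G.Adj v w ∧ G.dist s w = G.dist s v + 1),
        ((sigma' G s v : ℝ) / (sigma' G s w : ℝ)) *
          (pairDep G s t w + if w = t then 1 else 0) := by
  have hst : (0:ℝ) < (sigma' G s t : ℝ) := by exact_mod_cast sigma'_pos hG s t
  have hsv : (0:ℝ) < (sigma' G s v : ℝ) := by exact_mod_cast sigma'_pos hG s v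
  have hsum : ∀ w ∈ univ.filter (fun w => G.Adj v w ∧ G.dist s w = G.dist s v + 1),
      ((sigma' G s v : ℝ) / (sigma' G s w : ℝ)) *
          (pairDep G s t w + if w = t then 1 else 0) =
      ((sigma' G s v : ℝ) / (sigma' G s t : ℝ)) *
          (if w = t then (1:ℝ)
           else if G.dist s w + G.dist w t = G.dist s t then (sigma' G w t : ℝ) else 0) := by
    intro w hw
    simp only [Finset.mem_filter, Finset.mem_univ, true_and] at hw
    have hws : w ≠ s := succ_ne_s hw.2
    have hsw : (0:ℝ) < (sigma' G s w : ℝ) := by exact_mod_cast sigma'_pos hG s w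
    rcases eq_or_ne w t with rfl | hwt
    · rw [if_pos rfl, if_pos rfl, pairDep, sigmaThrough_end]
      simp
    · rw [if_neg hwt, if_neg hwt, pairDep, sigmaThrough_eq hG s t w hws hwt]
      by_cases hc' : G.dist s w + G.dist w t = G.dist s t
      · rw [if_pos hc', if_pos hc']
        push_cast
        field_simp
        ring
      · rw [if_neg hc', if_neg hc']
        simp
  rw [Finset.sum_congr rfl hsum, ← Finset.mul_sum]
  have hkey : (∑ w ∈ univ.filter (fun w => G.Adj v w ∧ G.dist s w = G.dist s v + 1),
      (if w = t then (1:ℝ)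
       else if G.dist s w + G.dist w t = G.dist s t then (sigma' G w t : ℝ) else 0)) =
      ((if G.dist s v + G.dist v t = G.dist s t then sigma' G v t else 0 : ℕ) : ℝ) := by
    rw [star hG s v t hvt]
    push_cast
    rfl
  rw [hkey, pairDep, sigmaThrough_eq hG s t v hvs hvt]
  by_cases hc : G.dist s v + G.dist v t = G.dist s t
  · rw [if_pos hc, if_pos hc]
    push_cast
    field_simp
  · rw [if_neg hc, if_neg hc]
    simp

end BrandesAux

/-- Brandes' recursion: for `v ≠ s` in a connected graph,
`δ_{s*}(v) = Σ_{w : v ∈ P_s(w)} (σ_{sv}/σ_{sw}) · (1 + δ_{s*}(w))`, where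
`P_s(w)` is the set of neighbors `v` of `w` with `d(s,w) = d(s,v) + 1`. -/
theorem brandes_recursion {V : Type*} [Fintype V] (G : SimpleGraph V)
    (hG : G.Connected) (s v : V) (hv : v ≠ s) :
    dep G s v =
      ∑ w ∈ Finset.univ.filter
        (fun w => G.Adj v w ∧ G.dist s w = G.dist s v + 1),
        ((sigma' G s v : ℝ) / (sigma' G s w : ℝ)) * (1 + dep G s w) := by
  classical
  rw [dep]
  rw [Finset.sum_congr rfl (fun t ht => by
    simp only [Finset.mem_filter, Finset.mem_univ, true_and] at ht
    exact BrandesAux.per_t hG s v t hv (Ne.symm ht.2))]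
  rw [Finset.sum_comm]
  apply Finset.sum_congr rfl
  intro w hw
  simp only [Finset.mem_filter, Finset.mem_univ, true_and] at hw
  rw [← Finset.mul_sum]
  congr 1
  have hws : w ≠ s := BrandesAux.succ_ne_s hw.2
  have hwv : w ≠ v := hw.1.ne'
  rw [Finset.sum_add_distrib, Finset.sum_ite_eq,
    if_pos (by simp only [Finset.mem_filter, Finset.mem_univ, true_and]; exact ⟨hws, hwv⟩)]
  rw [dep]
  have h1 : ∑ t ∈ Finset.univ.filter (fun t => t ≠ s ∧ t ≠ v), pairDep G s t w
      = ∑ t ∈ Finset.univ.filter (fun t => t ≠ s), pairDep G s t w := by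
    apply Finset.sum_subset
    · intro t ht
      simp only [Finset.mem_filter, Finset.mem_univ, true_and] at ht ⊢
      exact ht.1
    · intro t ht hnt
      simp only [Finset.mem_filter, Finset.mem_univ, true_and] at ht hnt
      have htv : t = v := by tauto
      subst htv
      rw [pairDep, BrandesAux.sigmaThrough_eq hG s t w hws hwv, if_neg (by omega),
        Nat.cast_zero, zero_div]
  have h2 : ∑ t ∈ Finset.univ.filter (fun t => t ≠ s ∧ t ≠ w), pairDep G s t w
      = ∑ t ∈ Finset.univ.filter (fun t => t ≠ s), pairDep G s t w := by
    apply Finset.sum_subset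
    · intro t ht
      simp only [Finset.mem_filter, Finset.mem_univ, true_and] at ht ⊢
      exact ht.1
    · intro t ht hnt
      simp only [Finset.mem_filter, Finset.mem_univ, true_and] at ht hnt
      have htw : t = w := by tauto
      subst htw
      rw [pairDep, BrandesAux.sigmaThrough_end, Nat.cast_zero, zero_div]
  rw [h1, ← h2]
  ring
end

section
/- Any tree T_r obtained as a shortest-path tree rooted at a node r (every tree path from r to v has weight equal to ω_G(r,v)) is a 2-approximation for the S-MRCT problem when r ∈ S: RC_S(T_r) ≤ 2·RC_S(T*) for the optimal Steiner routing-cost tree T*, where RC_S(T) := Σ_{u,v∈S} ω_T(u,v). -/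
open Finset

/-- The total weight of a walk in a graph, for an edge-weight function `w`. -/
def walkWeight {V : Type*} {G : SimpleGraph V} (w : V → V → ℕ) :
    {u v : V} → G.Walk u v → ℕ
  | _, _, SimpleGraph.Walk.nil => 0
  | u, _, SimpleGraph.Walk.cons (v := x) _ p => w u x + walkWeight w p

/-- The weighted distance: least total weight of a walk from `u` to `v`. -/
noncomputable def wdist {V : Type*} (G : SimpleGraph V) (w : V → V → ℕ) (u v : V) : ℕ :=
  sInf {n : ℕ | ∃ p : G.Walk u v, walkWeight w p = n}

/-- Routing cost of a subgraph `H` with respect to the terminal set `S`: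
`RC_S(H) = Σ_{(u,v) ∈ S×S} ω_H(u,v)`. -/
noncomputable def routingCost {V : Type*} (H : SimpleGraph V) (w : V → V → ℕ)
    (S : Finset V) : ℕ :=
  ∑ p ∈ S ×ˢ S, wdist H w p.1 p.2

section Helpers

open SimpleGraph

variable {V : Type*}

lemma walkWeight_append {G : SimpleGraph V} (w : V → V → ℕ) {u v x : V}
    (p : G.Walk u v) (q : G.Walk v x) :
    walkWeight w (p.append q) = walkWeight w p + walkWeight w q := by
  induction p with
  | nil => simp [walkWeight]
  | cons h p ih => simp [walkWeight, ih]; omega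

lemma walkWeight_reverse {G : SimpleGraph V} (w : V → V → ℕ)
    (hsymm : ∀ a b, w a b = w b a) {u v : V} (p : G.Walk u v) :
    walkWeight w p.reverse = walkWeight w p := by
  induction p with
  | nil => rfl
  | cons h p ih =>
    rw [Walk.reverse_cons, walkWeight_append, ih]
    simp [walkWeight, hsymm]
    omega

lemma wdist_le_walkWeight {G : SimpleGraph V} (w : V → V → ℕ) {u v : V}
    (p : G.Walk u v) : wdist G w u v ≤ walkWeight w p :=
  Nat.sInf_le ⟨p, rfl⟩

lemma exists_walk_wdist {G : SimpleGraph V} (w : V → V → ℕ) {u v : V}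
    (h : G.Reachable u v) :
    ∃ p : G.Walk u v, walkWeight w p = wdist G w u v := by
  have hne : {n : ℕ | ∃ p : G.Walk u v, walkWeight w p = n}.Nonempty := by
    obtain ⟨p⟩ := h
    exact ⟨walkWeight w p, p, rfl⟩
  exact Nat.sInf_mem hne

lemma walkWeight_mapLe {G G' : SimpleGraph V} (hle : G ≤ G') (w : V → V → ℕ)
    {u v : V} (p : G.Walk u v) :
    walkWeight w (p.mapLe hle) = walkWeight w p := by
  induction p with
  | nil => rfl
  | cons h p ih => simp [Walk.mapLe, walkWeight] at *; omega

lemma wdist_mono {G G' : SimpleGraph V} (hle : G ≤ G') (w : V → V → ℕ)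
    {u v : V} (h : G.Reachable u v) :
    wdist G' w u v ≤ wdist G w u v := by
  obtain ⟨p, hp⟩ := exists_walk_wdist w h
  calc wdist G' w u v ≤ walkWeight w (p.mapLe hle) := wdist_le_walkWeight w _
    _ = wdist G w u v := by rw [walkWeight_mapLe, hp]

lemma walkWeight_pos {G : SimpleGraph V} {w : V → V → ℕ}
    (hpos : ∀ a b, G.Adj a b → 0 < w a b) {u v : V} (hne : u ≠ v)
    (p : G.Walk u v) : 0 < walkWeight w p := by
  cases p with
  | nil => exact absurd rfl hne
  | cons h p =>
    have := hpos _ _ h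
    simp [walkWeight]
    omega

end Helpers

/-- In a connected weighted graph `G` (symmetric positive
weights) with terminal set `S`, let `Tr r` (for each `r`) be a shortest-path
tree rooted at `r`: a subgraph of `G` that is acyclic and preserves all
weighted distances from `r` (`ω_{T_r}(r,v) = ω_G(r,v)` for all `v`).  Then the
best of the trees `Tr r` with `r ∈ S` is a 2-approximation for the `S`-MRCT
problem: for every acyclic subgraph `T'` of `G` in which all terminals are
mutually connected, `min_{r ∈ S} RC_S(T_r) ≤ 2 · RC_S(T')`. -/
theorem spt_two_approx_SMRCT {V : Type*} [Fintype V]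
    (G : SimpleGraph V) (hG : G.Connected)
    (w : V → V → ℕ) (hsymm : ∀ a b, w a b = w b a)
    (hpos : ∀ a b, G.Adj a b → 0 < w a b)
    (S : Finset V) (hS : S.Nonempty)
    (Tr : V → SimpleGraph V)
    (hTr_le : ∀ r, Tr r ≤ G)
    (hTr_acyclic : ∀ r, (Tr r).IsAcyclic)
    (hTr_spt : ∀ r v, wdist (Tr r) w r v = wdist G w r v)
    (T' : SimpleGraph V) (hT'_le : T' ≤ G) (hT'_acyclic : T'.IsAcyclic)
    (hT'_conn : ∀ u ∈ S, ∀ v ∈ S, T'.Reachable u v) :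
    ∃ r ∈ S, routingCost (Tr r) w S ≤ 2 * routingCost T' w S := by

  classical
  set RC := routingCost T' w S with hRC
  -- for each root r, the bound A r
  set A : V → ℕ := fun r => ∑ p ∈ S ×ˢ S, (wdist T' w r p.1 + wdist T' w r p.2)
    with hA
  -- key: in Tr r there is a walk from r achieving wdist
  have hwalk : ∀ r u, ∃ p : (Tr r).Walk r u, walkWeight w p = wdist (Tr r) w r u := by
    intro r u
    by_cases hru : r = u
    · subst hru
      refine ⟨SimpleGraph.Walk.nil, ?_⟩
      have h1 : wdist (Tr r) w r r ≤ walkWeight w (SimpleGraph.Walk.nil : (Tr r).Walk r r) :=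
        wdist_le_walkWeight w _
      have : walkWeight w (SimpleGraph.Walk.nil : (Tr r).Walk r r) = 0 := rfl
      omega
    · -- wdist G r u > 0, hence the set of Tr-walk weights is nonempty
      have hreach : G.Reachable r u := hG.preconnected r u
      obtain ⟨pG, hpG⟩ := exists_walk_wdist w hreach
      have hGpos : 0 < wdist G w r u := by
        rw [← hpG]; exact walkWeight_pos hpos hru pG
      have hTrpos : 0 < wdist (Tr r) w r u := by rw [hTr_spt]; exact hGpos
      have hne : {n : ℕ | ∃ p : (Tr r).Walk r u, walkWeight w p = n}.Nonempty := by
        by_contra hemp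
        rw [Set.not_nonempty_iff_eq_empty] at hemp
        have : wdist (Tr r) w r u = 0 := by
          rw [wdist, hemp, Nat.sInf_empty]
        omega
      exact Nat.sInf_mem hne
  -- pointwise bound: routingCost (Tr r) ≤ A r for r ∈ S
  have hbound : ∀ r ∈ S, routingCost (Tr r) w S ≤ A r := by
    intro r hr
    refine Finset.sum_le_sum ?_
    rintro ⟨u, v⟩ hp
    simp only [Finset.mem_product] at hp
    obtain ⟨pu, hpu⟩ := hwalk r u
    obtain ⟨pv, hpv⟩ := hwalk r v
    have htri : wdist (Tr r) w u v ≤ wdist (Tr r) w r u + wdist (Tr r) w r v := by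
      calc wdist (Tr r) w u v ≤ walkWeight w (pu.reverse.append pv) :=
            wdist_le_walkWeight w _
        _ = walkWeight w pu + walkWeight w pv := by
            rw [walkWeight_append, walkWeight_reverse w hsymm]
        _ = _ := by rw [hpu, hpv]
    have hGu : wdist G w r u ≤ wdist T' w r u :=
      wdist_mono hT'_le w (hT'_conn r hr u hp.1)
    have hGv : wdist G w r v ≤ wdist T' w r v :=
      wdist_mono hT'_le w (hT'_conn r hr v hp.2)
    have := hTr_spt r u
    have := hTr_spt r v
    simp only
    omega
  -- sum of the bounds equals 2 * |S| * RC
  have hsumA : ∑ r ∈ S, A r = ∑ r ∈ S, 2 * RC := by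
    have hAr : ∀ r, A r = 2 * S.card * ∑ u ∈ S, wdist T' w r u := by
      intro r
      have h1 : ∑ p ∈ S ×ˢ S, wdist T' w r p.1 = S.card * ∑ u ∈ S, wdist T' w r u := by
        rw [Finset.sum_product]
        simp only [Finset.sum_const, smul_eq_mul]
        rw [Finset.mul_sum]
      have h2 : ∑ p ∈ S ×ˢ S, wdist T' w r p.2 = S.card * ∑ u ∈ S, wdist T' w r u := by
        rw [Finset.sum_product]
        simp only [Finset.sum_const, smul_eq_mul]
      simp only [hA]
      rw [Finset.sum_add_distrib, h1, h2]
      ring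
    have hRCeq : RC = ∑ r ∈ S, ∑ u ∈ S, wdist T' w r u := by
      rw [hRC, routingCost, Finset.sum_product]
    calc ∑ r ∈ S, A r = ∑ r ∈ S, 2 * S.card * ∑ u ∈ S, wdist T' w r u := by
          exact Finset.sum_congr rfl fun r _ => hAr r
      _ = 2 * S.card * ∑ r ∈ S, ∑ u ∈ S, wdist T' w r u := by
          rw [Finset.mul_sum]
      _ = ∑ r ∈ S, 2 * RC := by
          rw [← hRCeq, Finset.sum_const, smul_eq_mul]; ring
  obtain ⟨r, hr, hle⟩ := Finset.exists_le_of_sum_le hS (le_of_eq hsumA)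
  exact ⟨r, hr, le_trans (hbound r hr) hle⟩
end

section
/- Closeness centrality sampling guarantee (Eppstein–Wang): let ĉ(v) := (1/k)·Σ_{i=1}^{k} n·d(v,s_i)/(n-1) be the estimate of the inverse closeness centrality 1/CC(v) = Σ_u d(v,u)/(n-1) from k uniformly random sample nodes s_1,...,s_k. Then by Hoeffding's inequality, Pr[|ĉ(v) - 1/CC(v)| ≥ ε·D] ≤ 2·exp(-k·ε²·(n-1)²/(2n²)), so k = O(log(n)/ε²) samples suffice for error εD with high probability. -/
open Finset MeasureTheory ProbabilityTheory Real

/-- Convexity bound: for `|y| ≤ B`, `exp (t*y) ≤ cosh (t*B) + (y/B) * sinh (t*B)`. -/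
lemma exp_le_cosh_add_sinh {B y t : ℝ} (hB : 0 < B) (hy : |y| ≤ B) :
    Real.exp (t * y) ≤ Real.cosh (t * B) + (y / B) * Real.sinh (t * B) := by
  obtain ⟨hy1, hy2⟩ := abs_le.mp hy
  set a : ℝ := (B + y) / (2 * B) with ha
  set b : ℝ := (B - y) / (2 * B) with hb
  have ha0 : 0 ≤ a := div_nonneg (by linarith) (by positivity)
  have hb0 : 0 ≤ b := div_nonneg (by linarith) (by positivity)
  have hab : a + b = 1 := by
    rw [ha, hb, ← add_div, div_eq_one_iff_eq (by positivity)]; ring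
  have hcomb : a • (t * B) + b • (-(t * B)) = t * y := by
    simp only [smul_eq_mul, ha, hb]; field_simp; ring
  have hconv := convexOn_exp.2 (Set.mem_univ (t * B)) (Set.mem_univ (-(t * B)))
    ha0 hb0 hab
  rw [hcomb] at hconv
  simp only [smul_eq_mul] at hconv
  calc Real.exp (t * y) ≤ a * Real.exp (t * B) + b * Real.exp (-(t * B)) := hconv
    _ = Real.cosh (t * B) + (y / B) * Real.sinh (t * B) := by
        rw [Real.cosh_eq, Real.sinh_eq, ha, hb]
        field_simp
        ring

/-- MGF bound for a centered bounded random variable. -/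
lemma mgf_le_of_bounded {Ω : Type*} [MeasureSpace Ω]
    [IsProbabilityMeasure (ℙ : Measure Ω)] {Y : Ω → ℝ} {B : ℝ} (hB : 0 < B)
    (hmeas : Measurable Y) (hbd : ∀ ω, |Y ω| ≤ B) (hmean : ∫ ω, Y ω = 0) (t : ℝ) :
    mgf Y ℙ t ≤ Real.exp (t ^ 2 * B ^ 2 / 2) := by
  have hintY : Integrable Y ℙ := by
    refine Integrable.mono' (integrable_const B) hmeas.aestronglyMeasurable ?_
    exact Filter.Eventually.of_forall hbd
  have hint : Integrable (fun ω => Real.exp (t * Y ω)) ℙ := by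
    refine Integrable.mono' (integrable_const (Real.exp (|t| * B)))
      ((hmeas.const_mul t).exp).aestronglyMeasurable ?_
    refine Filter.Eventually.of_forall fun ω => ?_
    rw [Real.norm_eq_abs, abs_of_pos (Real.exp_pos _), Real.exp_le_exp]
    calc t * Y ω ≤ |t * Y ω| := le_abs_self _
      _ = |t| * |Y ω| := abs_mul _ _
      _ ≤ |t| * B := by
          exact mul_le_mul_of_nonneg_left (hbd ω) (abs_nonneg t)
  have h1 : mgf Y ℙ t ≤ ∫ ω, (Real.cosh (t * B) + (Y ω / B) * Real.sinh (t * B)) := by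
    refine integral_mono hint ?_ fun ω => exp_le_cosh_add_sinh hB (hbd ω)
    exact (integrable_const _).add (((hintY.div_const B).mul_const _))
  have h2 : ∫ ω, (Real.cosh (t * B) + (Y ω / B) * Real.sinh (t * B))
      = Real.cosh (t * B) := by
    rw [integral_add (integrable_const _) ((hintY.div_const B).mul_const _)]
    simp only [integral_const, measure_univ, ENNReal.toReal_one, probReal_univ, smul_eq_mul, one_mul]
    rw [integral_mul_const]
    have : ∫ ω, Y ω / B = 0 := by
      rw [integral_div, hmean, zero_div]
    rw [this, zero_mul, add_zero]
  calc mgf Y ℙ t ≤ Real.cosh (t * B) := h1.trans_eq h2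
    _ ≤ Real.exp ((t * B) ^ 2 / 2) := Real.cosh_le_exp_half_sq _
    _ = Real.exp (t ^ 2 * B ^ 2 / 2) := by rw [mul_pow]

/-- One-sided Hoeffding bound for centered, bounded, independent random variables. -/
lemma hoeffding_one_sided {Ω : Type*} [MeasureSpace Ω]
    [IsProbabilityMeasure (ℙ : Measure Ω)] {k : ℕ} (hk : 0 < k)
    {Y : Fin k → Ω → ℝ} {B : ℝ} (hB : 0 < B)
    (hindep : iIndepFun Y ℙ)
    (hmeas : ∀ i, Measurable (Y i))
    (hbd : ∀ i ω, |Y i ω| ≤ B) (hmean : ∀ i, ∫ ω, Y i ω = 0)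
    {a : ℝ} (ha : 0 < a) :
    (ℙ {ω : Ω | a ≤ ∑ i : Fin k, Y i ω}).toReal
      ≤ Real.exp (-(a ^ 2) / (2 * k * B ^ 2)) := by
  set t : ℝ := a / (k * B ^ 2) with ht
  have ht0 : 0 < t := by positivity
  have hint : ∀ i ∈ Finset.univ, Integrable (fun ω => Real.exp (t * Y i ω)) ℙ := by
    intro i _
    refine Integrable.mono' (integrable_const (Real.exp (|t| * B)))
      (((hmeas i).const_mul t).exp).aestronglyMeasurable ?_
    refine Filter.Eventually.of_forall fun ω => ?_
    rw [Real.norm_eq_abs, abs_of_pos (Real.exp_pos _), Real.exp_le_exp]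
    calc t * Y i ω ≤ |t * Y i ω| := le_abs_self _
      _ = |t| * |Y i ω| := abs_mul _ _
      _ ≤ |t| * B := mul_le_mul_of_nonneg_left (hbd i ω) (abs_nonneg t)
  have hintS : Integrable (fun ω => Real.exp (t * (∑ i : Fin k, Y i) ω)) ℙ :=
    hindep.integrable_exp_mul_sum hmeas hint
  have hset : {ω : Ω | a ≤ ∑ i : Fin k, Y i ω} = {ω : Ω | a ≤ (∑ i : Fin k, Y i) ω} := by
    ext ω; simp [Finset.sum_apply]
  rw [hset]
  have hchern := measure_ge_le_exp_mul_mgf (X := ∑ i : Fin k, Y i) (μ := ℙ) a ht0.le hintS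
  refine hchern.trans ?_
  have hmgf : mgf (∑ i : Fin k, Y i) ℙ t ≤ Real.exp (k * (t ^ 2 * B ^ 2 / 2)) := by
    rw [hindep.mgf_sum hmeas]
    calc ∏ i : Fin k, mgf (Y i) ℙ t
        ≤ ∏ _i : Fin k, Real.exp (t ^ 2 * B ^ 2 / 2) := by
          refine Finset.prod_le_prod (fun i _ => mgf_nonneg) fun i _ => ?_
          exact mgf_le_of_bounded hB (hmeas i) (hbd i) (hmean i) t
      _ = Real.exp (k * (t ^ 2 * B ^ 2 / 2)) := by
          rw [Finset.prod_const, ← Real.exp_nat_mul]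
          simp
  calc Real.exp (-t * a) * mgf (∑ i : Fin k, Y i) ℙ t
      ≤ Real.exp (-t * a) * Real.exp (k * (t ^ 2 * B ^ 2 / 2)) := by
        exact mul_le_mul_of_nonneg_left hmgf (Real.exp_pos _).le
    _ = Real.exp (-t * a + k * (t ^ 2 * B ^ 2 / 2)) := (Real.exp_add _ _).symm
    _ = Real.exp (-(a ^ 2) / (2 * k * B ^ 2)) := by
        congr 1
        have hk0 : (k : ℝ) ≠ 0 := Nat.cast_ne_zero.mpr hk.ne'
        have hB0 : B ≠ 0 := hB.ne'
        rw [ht]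
        field_simp
        ring

/-- Eppstein–Wang sampling guarantee via Hoeffding.  Let `G` be
a connected unweighted graph on `n` nodes with diameter `Dm`, and let
`s_1, …, s_k` be i.i.d. uniformly random nodes on a probability space `Ω`.
For a node `v`, the estimate `ĉ(v) = (1/k) Σ_i n·d(v,s_i)/(n-1)` of the
inverse closeness centrality `1/CC(v) = Σ_u d(v,u)/(n-1)` satisfies
`Pr[|ĉ(v) - 1/CC(v)| ≥ ε·Dm] ≤ 2·exp(-k·ε²·(n-1)²/(2n²))`. -/
theorem closeness_sampling_hoeffding {V : Type*} [Fintype V] [Nonempty V]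
    [MeasurableSpace V] [MeasurableSingletonClass V]
    (G : SimpleGraph V) (hG : G.Connected)
    (n : ℕ) (hn : n = Fintype.card V) (hn2 : 2 ≤ n)
    (Dm : ℕ) (hDm : Dm = (Finset.univ ×ˢ Finset.univ).sup
      (fun p : V × V => G.dist p.1 p.2)) (hDm0 : 0 < Dm)
    {Ω : Type*} [MeasureSpace Ω] [IsProbabilityMeasure (ℙ : Measure Ω)]
    (k : ℕ) (hk : 0 < k)
    (s : Fin k → Ω → V)
    (hmeas : ∀ i, Measurable (s i))
    (hindep : iIndepFun s ℙ)
    (hunif : ∀ i, Measure.map (s i) ℙ = (PMF.uniformOfFintype V).toMeasure)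
    (ε : ℝ) (hε : 0 < ε) (v : V) :
    (ℙ {ω : Ω |
        ε * Dm ≤
          |(1 / (k : ℝ)) * ∑ i : Fin k,
              (n : ℝ) * (G.dist v (s i ω) : ℝ) / ((n : ℝ) - 1) -
            (∑ u : V, (G.dist v u : ℝ)) / ((n : ℝ) - 1)|}).toReal ≤
      2 * Real.exp (-(k : ℝ) * ε ^ 2 * ((n : ℝ) - 1) ^ 2 / (2 * (n : ℝ) ^ 2)) := by
  have hn1 : (1 : ℝ) < (n : ℝ) := by exact_mod_cast lt_of_lt_of_le one_lt_two hn2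
  have hn1' : (0 : ℝ) < (n : ℝ) - 1 := by linarith
  have hn0 : (0 : ℝ) < (n : ℝ) := by linarith
  have hk0 : (0 : ℝ) < (k : ℝ) := Nat.cast_pos.mpr hk
  have hDmR : (0 : ℝ) < (Dm : ℝ) := Nat.cast_pos.mpr hDm0
  -- the centered per-sample function
  set c : ℝ := (∑ u : V, (G.dist v u : ℝ)) / ((n : ℝ) - 1) with hc
  set B : ℝ := (n : ℝ) * (Dm : ℝ) / ((n : ℝ) - 1) with hB
  have hBpos : 0 < B := by positivity
  set g : V → ℝ := fun u => (n : ℝ) * (G.dist v u : ℝ) / ((n : ℝ) - 1) - c with hg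
  have hgmeas : Measurable g := measurable_of_finite g
  -- distance bound
  have hdist : ∀ u : V, (G.dist v u : ℝ) ≤ (Dm : ℝ) := by
    intro u
    have : G.dist v u ≤ Dm := by
      rw [hDm]
      exact Finset.le_sup (f := fun p : V × V => G.dist p.1 p.2)
        (b := (v, u)) (by simp)
    exact_mod_cast this
  -- 0 ≤ c ≤ B
  have hc0 : 0 ≤ c := by
    apply div_nonneg _ hn1'.le
    exact Finset.sum_nonneg fun u _ => Nat.cast_nonneg _
  have hcB : c ≤ B := by
    rw [hc, hB, div_le_div_iff_of_pos_right hn1']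
    calc (∑ u : V, (G.dist v u : ℝ)) ≤ ∑ _u : V, (Dm : ℝ) :=
          Finset.sum_le_sum fun u _ => hdist u
      _ = (n : ℝ) * (Dm : ℝ) := by
          rw [Finset.sum_const, Finset.card_univ, ← hn, nsmul_eq_mul]
  -- |g u| ≤ B
  have hgB : ∀ u : V, |g u| ≤ B := by
    intro u
    rw [abs_le, hg]
    constructor
    · have h1 : (0 : ℝ) ≤ (n : ℝ) * (G.dist v u : ℝ) / ((n : ℝ) - 1) := by positivity
      simp only
      linarith
    · have h2 : (n : ℝ) * (G.dist v u : ℝ) / ((n : ℝ) - 1) ≤ B := by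
        rw [hB, div_le_div_iff_of_pos_right hn1']
        exact mul_le_mul_of_nonneg_left (hdist u) hn0.le
      simp only
      linarith
  -- mean of g under uniform is 0
  have hgsum : ∑ u : V, g u = 0 := by
    rw [hg]
    simp only
    rw [Finset.sum_sub_distrib, Finset.sum_const, Finset.card_univ, ← hn, nsmul_eq_mul]
    have : ∑ u : V, (n : ℝ) * (G.dist v u : ℝ) / ((n : ℝ) - 1)
        = (n : ℝ) * c := by
      rw [← Finset.sum_div, ← Finset.mul_sum, hc, mul_div_assoc]
    rw [this, sub_self]
  set Y : Fin k → Ω → ℝ := fun i ω => g (s i ω) with hY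
  have hYmeas : ∀ i, Measurable (Y i) := fun i => hgmeas.comp (hmeas i)
  have hYindep : iIndepFun Y ℙ :=
    hindep.comp (fun _ => g) (fun _ => hgmeas)
  have hYbd : ∀ i ω, |Y i ω| ≤ B := fun i ω => hgB _
  have hYmean : ∀ i, ∫ ω, Y i ω = 0 := by
    intro i
    have : ∫ ω, Y i ω ∂ℙ = ∫ u, g u ∂(Measure.map (s i) ℙ) := by
      rw [integral_map (hmeas i).aemeasurable hgmeas.aestronglyMeasurable]
    rw [this, hunif i, PMF.integral_eq_sum]
    simp only [PMF.uniformOfFintype_apply, smul_eq_mul]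
    rw [← Finset.mul_sum, hgsum, mul_zero]
  -- rewrite the event
  set a : ℝ := (k : ℝ) * (ε * (Dm : ℝ)) with haa
  have hapos : 0 < a := by positivity
  have hevent : {ω : Ω |
        ε * Dm ≤
          |(1 / (k : ℝ)) * ∑ i : Fin k,
              (n : ℝ) * (G.dist v (s i ω) : ℝ) / ((n : ℝ) - 1) -
            (∑ u : V, (G.dist v u : ℝ)) / ((n : ℝ) - 1)|}
      = {ω : Ω | a ≤ |∑ i : Fin k, Y i ω|} := by
    ext ω
    simp only [Set.mem_setOf_eq]
    have hsum : (1 / (k : ℝ)) * (∑ i : Fin k,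
          (n : ℝ) * (G.dist v (s i ω) : ℝ) / ((n : ℝ) - 1)) - c
        = (1 / (k : ℝ)) * ∑ i : Fin k, Y i ω := by
      rw [hY]
      simp only [hg]
      rw [Finset.sum_sub_distrib, Finset.sum_const, Finset.card_univ,
        Fintype.card_fin, nsmul_eq_mul, mul_sub]
      have : (1 / (k : ℝ)) * ((k : ℝ) * c) = c := by
        field_simp
      rw [this]
    rw [← hc, hsum, abs_mul, abs_of_pos (by positivity : (0:ℝ) < 1 / (k:ℝ))]
    rw [haa]
    constructor
    · intro h
      calc (k : ℝ) * (ε * (Dm : ℝ)) ≤ (k : ℝ) * (1 / (k : ℝ) * |∑ i : Fin k, Y i ω|) :=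
            mul_le_mul_of_nonneg_left h hk0.le
        _ = |∑ i : Fin k, Y i ω| := by field_simp
    · intro h
      rw [← mul_le_mul_iff_right₀ hk0]
      calc (k : ℝ) * (ε * (Dm : ℝ)) ≤ |∑ i : Fin k, Y i ω| := h
        _ = (k : ℝ) * (1 / (k : ℝ) * |∑ i : Fin k, Y i ω|) := by field_simp
  rw [hevent]
  -- split into two tails
  have hsubset : {ω : Ω | a ≤ |∑ i : Fin k, Y i ω|}
      ⊆ {ω : Ω | a ≤ ∑ i : Fin k, Y i ω} ∪ {ω : Ω | a ≤ ∑ i : Fin k, (-Y i) ω} := by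
    intro ω hω
    simp only [Set.mem_setOf_eq] at hω
    rcases le_abs.mp hω with h | h
    · exact Or.inl h
    · refine Or.inr ?_
      simp only [Set.mem_setOf_eq, Pi.neg_apply, Finset.sum_neg_distrib]
      exact h
  have hmZ : ∀ i, Measurable (fun ω => (-Y i) ω) := fun i => (hYmeas i).neg
  have hZindep : iIndepFun (fun i => -Y i) ℙ :=
    hYindep.comp (fun _ => Neg.neg) (fun _ => measurable_neg)
  have hZbd : ∀ i ω, |(-Y i) ω| ≤ B := by
    intro i ω; simp only [Pi.neg_apply, abs_neg]; exact hYbd i ω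
  have hZmean : ∀ i, ∫ ω, (-Y i) ω = 0 := by
    intro i
    simp only [Pi.neg_apply]
    rw [integral_neg, hYmean i, neg_zero]
  have hA := hoeffding_one_sided hk hBpos hYindep hYmeas hYbd hYmean hapos
  have hB2 := hoeffding_one_sided hk hBpos hZindep hmZ hZbd hZmean hapos
  have hle : ℙ {ω : Ω | a ≤ |∑ i : Fin k, Y i ω|}
      ≤ ℙ {ω : Ω | a ≤ ∑ i : Fin k, Y i ω}
        + ℙ {ω : Ω | a ≤ ∑ i : Fin k, (-Y i) ω} :=
    (measure_mono hsubset).trans (measure_union_le _ _)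
  have htr : (ℙ {ω : Ω | a ≤ |∑ i : Fin k, Y i ω|}).toReal
      ≤ (ℙ {ω : Ω | a ≤ ∑ i : Fin k, Y i ω}).toReal
        + (ℙ {ω : Ω | a ≤ ∑ i : Fin k, (-Y i) ω}).toReal := by
    rw [← ENNReal.toReal_add (measure_ne_top _ _) (measure_ne_top _ _)]
    exact ENNReal.toReal_mono
      (ENNReal.add_ne_top.mpr ⟨measure_ne_top _ _, measure_ne_top _ _⟩) hle
  have hexp : Real.exp (-(a ^ 2) / (2 * (k : ℝ) * B ^ 2))
      = Real.exp (-(k : ℝ) * ε ^ 2 * ((n : ℝ) - 1) ^ 2 / (2 * (n : ℝ) ^ 2)) := by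
    congr 1
    rw [haa, hB]
    have hDm0' : (Dm : ℝ) ≠ 0 := hDmR.ne'
    have hn1'' : (n : ℝ) - 1 ≠ 0 := hn1'.ne'
    field_simp
  calc (ℙ {ω : Ω | a ≤ |∑ i : Fin k, Y i ω|}).toReal
      ≤ (ℙ {ω : Ω | a ≤ ∑ i : Fin k, Y i ω}).toReal
        + (ℙ {ω : Ω | a ≤ ∑ i : Fin k, (-Y i) ω}).toReal := htr
    _ ≤ Real.exp (-(a ^ 2) / (2 * (k : ℝ) * B ^ 2))
        + Real.exp (-(a ^ 2) / (2 * (k : ℝ) * B ^ 2)) := add_le_add hA hB2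
    _ = 2 * Real.exp (-(k : ℝ) * ε ^ 2 * ((n : ℝ) - 1) ^ 2 / (2 * (n : ℝ) ^ 2)) := by
        rw [hexp]; ring
end
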